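/- arXiv:1601.04201 — 3 statements merged into one kernel-verified Lean document; each statement's English description precedes it below -/
import Mathlib

section
/- Let m ≥ 1 and let p be an odd prime with p ≢ 1 (mod 2^m). Then there exists n ∈ ℕ such that 2^m divides p^n - 1 but 2^(m+1) does not divide p^n - 1, if and only if p ≢ -1 (mod 2^m). -/
theorem stmt_2 (m p : ℕ) (hm : 1 ≤ m) (hp : p.Prime) (hodd : p ≠ 2)
    (h1 : ¬ (2 ^ m ∣ p - 1)) :
    (∃ n : ℕ, 2 ^ m ∣ p ^ n - 1 ∧ ¬ (2 ^ (m + 1) ∣ p ^ n - 1)) ↔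
      ¬ (2 ^ m ∣ p + 1) := by
  haveI : Fact (Nat.Prime 2) := ⟨Nat.prime_two⟩
  have hp3 : 3 ≤ p := by
    rcases hp.two_le.lt_or_eq with h | h
    · omega
    · omega
  have hpodd : p % 2 = 1 := Nat.odd_iff.mp (hp.odd_of_ne_two hodd)
  set a := padicValNat 2 (p - 1) with ha
  set b := padicValNat 2 (p + 1) with hb
  have hsub_ne : p - 1 ≠ 0 := by omega
  have hadd_ne : p + 1 ≠ 0 := by omega
  have ha1 : 1 ≤ a := one_le_padicValNat_of_dvd (by omega) (by omega)
  have hb1 : 1 ≤ b := one_le_padicValNat_of_dvd (by omega) (by omega)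
  have ham : a < m := by
    by_contra h
    exact h1 ((padicValNat_dvd_iff_le hsub_ne).mpr (by omega))
  have hmin : a = 1 ∨ b = 1 := by
    by_contra h
    push_neg at h
    have h4a : 2 ^ 2 ∣ p - 1 := (padicValNat_dvd_iff_le hsub_ne).mpr (by omega)
    have h4b : 2 ^ 2 ∣ p + 1 := (padicValNat_dvd_iff_le hadd_ne).mpr (by omega)
    omega
  -- factorization for odd exponent
  have hodd_case : ∀ n : ℕ, n % 2 = 1 → 2 ^ m ∣ p ^ n - 1 → False := by
    intro n hn hdvd
    set S := ∑ i ∈ Finset.range n, p ^ i with hS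
    have hfac : p ^ n - 1 = (p - 1) * S := by
      have h1p : (1:ℕ) ≤ p ^ n := Nat.one_le_pow _ _ (by omega)
      have : ((p : ℤ) - 1) * (S : ℤ) = (p : ℤ) ^ n - 1 := by
        rw [hS]
        push_cast
        rw [mul_comm]
        exact geom_sum_mul (p : ℤ) n
      have := this.symm
      zify [h1p, (by omega : (1:ℕ) ≤ p)]
      linarith [this]
    have hSodd : S % 2 = 1 := by
      have hterm : ∀ i ∈ Finset.range n, p ^ i % 2 = 1 := by
        intro i _
        simp [Nat.pow_mod, hpodd]
      rw [hS, Finset.sum_nat_mod, Finset.sum_congr rfl hterm]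
      simp [hn]
    have hcop : Nat.Coprime (2 ^ m) S := by
      apply Nat.Coprime.pow_left
      exact Nat.prime_two.coprime_iff_not_dvd.mpr (by omega)
    rw [hfac] at hdvd
    exact h1 (hcop.dvd_of_dvd_mul_right hdvd)
  constructor
  · rintro ⟨n, hd1, hd2⟩
    have hn0 : n ≠ 0 := by
      rintro rfl
      simp at hd1 hd2
    have hne : p ^ n - 1 ≠ 0 := by
      have : 2 ≤ p ^ n := by
        calc 2 ≤ p := by omega
        _ ≤ p ^ n := Nat.le_self_pow hn0 p
      omega
    have hneven : n % 2 = 0 := by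
      rcases Nat.even_or_odd n with h | h
      · exact Nat.even_iff.mp h
      · exact absurd hd1 (fun hc => hodd_case n (Nat.odd_iff.mp h) hc)
    have hlte := padicValNat.pow_two_sub_pow (x := p) (y := 1)
      (by omega) (by omega) (by omega) hn0 (Nat.even_iff.mpr hneven)
    simp only [one_pow] at hlte
    have hv1 : m ≤ padicValNat 2 (p ^ n - 1) :=
      (padicValNat_dvd_iff_le hne).mp hd1
    have hv2 : padicValNat 2 (p ^ n - 1) < m + 1 := by
      by_contra h
      exact hd2 ((padicValNat_dvd_iff_le hne).mpr (by omega))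
    have hveq : padicValNat 2 (p ^ n - 1) = m := by omega
    have hn1 : 1 ≤ padicValNat 2 n :=
      one_le_padicValNat_of_dvd hn0 (by omega)
    intro hc
    have hbm : m ≤ b := (padicValNat_dvd_iff_le hadd_ne).mp hc
    omega
  · intro hc
    have hbm : b < m := by
      by_contra h
      exact hc ((padicValNat_dvd_iff_le hadd_ne).mpr (by omega))
    have habm : a + b ≤ m := by omega
    set k := m + 1 - a - b with hk
    have hk1 : 1 ≤ k := by omega
    refine ⟨2 ^ k, ?_, ?_⟩
    all_goals {
      have hn0 : (2:ℕ) ^ k ≠ 0 := by positivity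
      have hne : p ^ 2 ^ k - 1 ≠ 0 := by
        have : 2 ≤ p ^ 2 ^ k := by
          calc 2 ≤ p := by omega
          _ ≤ p ^ 2 ^ k := Nat.le_self_pow hn0 p
        omega
      have heven : Even ((2:ℕ) ^ k) :=
        (Nat.even_pow).mpr ⟨even_two, by omega⟩
      have hlte := padicValNat.pow_two_sub_pow (x := p) (y := 1)
        (by omega) (by omega) (by omega) hn0 heven
      simp only [one_pow] at hlte
      have hvk : padicValNat 2 (2 ^ k) = k := by
        simpa using padicValNat.prime_pow 2 k
      first
        | exact (padicValNat_dvd_iff_le hne).mpr (by omega)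
        | { rw [padicValNat_dvd_iff_le hne]; omega }
        | { intro hcon
            have := (padicValNat_dvd_iff_le hne).mp hcon
            omega }
    }
end

section
/- Let m ≥ 1 and let p be an odd prime with p ≢ ±1 (mod 2^m), and let n be the multiplicative order of p in (ℤ/2^mℤ)^×. Then 2^m divides p^n - 1 and 2^(m+1) does not divide p^n - 1. -/
lemma aux_two (m q r : ℕ) (hq : q % 4 = 2) (h : 2 ^ (m + 1) ∣ q * r) :
    2 ^ m ∣ r := by
  obtain ⟨u, hu⟩ : 2 ∣ q := by omega
  have hu_odd : u % 2 = 1 := by omega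
  have h2 : 2 ^ m ∣ u * r := by
    rcases h with ⟨c, hc⟩
    refine ⟨c, ?_⟩
    have : 2 * (u * r) = 2 * (2 ^ m * c) := by
      rw [pow_succ, mul_comm (2^m) 2, mul_assoc] at hc
      rw [← hc, hu]; ring
    omega
  have hcop : Nat.Coprime (2 ^ m) u :=
    Nat.Coprime.pow_left m (Nat.coprime_two_left.mpr (Nat.odd_iff.mpr hu_odd))
  exact hcop.dvd_of_dvd_mul_left h2

theorem stmt_3 (m p : ℕ) (hm : 1 ≤ m) (hp : p.Prime) (hodd : p ≠ 2)
    (h1 : ¬ (2 ^ m ∣ p - 1)) (h2 : ¬ (2 ^ m ∣ p + 1))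
    (n : ℕ) (hn : n = orderOf (p : ZMod (2 ^ m))) :
    2 ^ m ∣ p ^ n - 1 ∧ ¬ (2 ^ (m + 1) ∣ p ^ n - 1) := by
  have hp2 : 2 ≤ p := hp.two_le
  have hpodd : p % 2 = 1 := Nat.odd_iff.mp (hp.odd_of_ne_two hodd)
  have hp3 : 3 ≤ p := by omega
  have hcop : Nat.Coprime p (2 ^ m) :=
    (Nat.coprime_two_right.mpr (hp.odd_of_ne_two hodd)).pow_right m
  have heuler : p ^ Nat.totient (2 ^ m) ≡ 1 [MOD 2 ^ m] :=
    Nat.ModEq.pow_totient hcop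
  have htot : Nat.totient (2 ^ m) = 2 ^ (m - 1) := by
    rw [Nat.totient_prime_pow Nat.prime_two hm]; simp
  have hpow1 : ((p : ZMod (2 ^ m))) ^ Nat.totient (2 ^ m) = 1 := by
    have := (ZMod.natCast_eq_natCast_iff _ _ _).mpr heuler
    push_cast at this
    exact this
  have hndvd : n ∣ 2 ^ (m - 1) := by
    rw [hn, ← htot]
    exact orderOf_dvd_of_pow_eq_one hpow1
  obtain ⟨j, hj, hnj⟩ := (Nat.dvd_prime_pow Nat.prime_two).mp hndvd
  have hnpos : 0 < n := by
    rw [hnj]; positivity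
  -- part 1
  have hkey : ∀ k : ℕ, (p : ZMod (2 ^ m)) ^ k = 1 → 2 ^ m ∣ p ^ k - 1 := by
    intro k hk
    have : ((p ^ k : ℕ) : ZMod (2 ^ m)) = ((1 : ℕ) : ZMod (2 ^ m)) := by
      push_cast; simpa using hk
    have hmod : p ^ k ≡ 1 [MOD 2 ^ m] := (ZMod.natCast_eq_natCast_iff _ _ _).mp this
    exact (Nat.modEq_iff_dvd' (Nat.one_le_pow _ _ (by omega))).mp hmod.symm
  have hrev : ∀ k : ℕ, 2 ^ m ∣ p ^ k - 1 → (p : ZMod (2 ^ m)) ^ k = 1 := by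
    intro k hk
    have hmod : p ^ k ≡ 1 [MOD 2 ^ m] :=
      ((Nat.modEq_iff_dvd' (Nat.one_le_pow _ _ (by omega))).mpr hk).symm
    have := (ZMod.natCast_eq_natCast_iff _ _ _).mpr hmod
    push_cast at this
    exact this
  have part1 : 2 ^ m ∣ p ^ n - 1 := by
    apply hkey
    rw [hn]
    exact pow_orderOf_eq_one _
  refine ⟨part1, ?_⟩
  intro hdvd
  have hp4 : p % 4 = 1 ∨ p % 4 = 3 := by omega
  match j, hnj with
  | 0, hnj =>
    simp at hnj
    rw [hnj, pow_one] at hdvd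
    exact h1 (dvd_trans (pow_dvd_pow 2 (by omega)) hdvd)
  | 1, hnj =>
    simp at hnj
    have hfac : p ^ n - 1 = (p + 1) * (p - 1) := by
      rw [hnj]
      have := Nat.sq_sub_sq p 1
      simpa [pow_two] using this
    rw [hfac] at hdvd
    rcases hp4 with h4 | h4
    · exact h1 (aux_two m (p + 1) (p - 1) (by omega) hdvd)
    · rw [mul_comm] at hdvd
      exact h2 (aux_two m (p - 1) (p + 1) (by omega) hdvd)
  | (j + 2), hnj =>
    set k := 2 ^ (j + 1) with hk
    have hnk : n = 2 * k := by rw [hnj, hk]; ring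
    have hk2 : 2 ≤ k := by rw [hk]; exact Nat.one_lt_two_pow (by omega)
    have hpk1 : 1 ≤ p ^ k := Nat.one_le_pow _ _ (by omega)
    -- p ^ k % 4 = 1 since k even
    have hpk4 : p ^ k % 4 = 1 := by
      have hsq : p ^ 2 % 4 = 1 := by
        have : p ^ 2 = p * p := sq p
        rcases hp4 with h4 | h4 <;> rw [this, Nat.mul_mod, h4]
      have : p ^ k = (p ^ 2) ^ (2 ^ j) := by
        rw [← pow_mul, hk]; ring_nf
      simp [this, Nat.pow_mod, hsq]
    have hfac : p ^ n - 1 = (p ^ k + 1) * (p ^ k - 1) := by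
      rw [hnk, mul_comm 2 k, pow_mul]
      have := Nat.sq_sub_sq (p ^ k) 1
      simpa [pow_two] using this
    rw [hfac] at hdvd
    have hdk : 2 ^ m ∣ p ^ k - 1 :=
      aux_two m (p ^ k + 1) (p ^ k - 1) (by omega) hdvd
    have : n ∣ k := by
      rw [hn]
      exact orderOf_dvd_of_pow_eq_one (hrev k hdk)
    have := Nat.le_of_dvd (by omega) this
    omega
end

section
/- Let q be an odd prime power and K a field (which may be assumed algebraically closed) containing F_q with characteristic not 2. Then there is no injective group homomorphism from SL_2(F_q) into PGL_2(K). -/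
open Matrix

section Aux

variable {K : Type*} [Field K]

/-- Anticommutator identity for traceless 2×2 matrices. -/
lemma aux_anticomm (X Y : Matrix (Fin 2) (Fin 2) K) (hX : X.trace = 0) (hY : Y.trace = 0) :
    X * Y + Y * X = (X * Y).trace • (1 : Matrix (Fin 2) (Fin 2) K) := by
  rw [Matrix.trace_fin_two] at hX hY
  have hX' : X 1 1 = -X 0 0 := by linear_combination hX
  have hY' : Y 1 1 = -Y 0 0 := by linear_combination hY
  ext i j
  fin_cases i <;> fin_cases j <;>
    simp [Matrix.mul_apply, Matrix.trace_fin_two, Fin.sum_univ_two, Matrix.one_apply, hX', hY'] <;>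
    ring

/-- A matrix with scalar square that is not scalar is traceless. -/
lemma aux_traceless (τ : Matrix (Fin 2) (Fin 2) K) (c : K) (hττ : τ * τ = c • 1)
    (hns : ∀ k : K, τ ≠ k • 1) : τ.trace = 0 := by
  by_contra h
  rw [Matrix.trace_fin_two] at h
  have e01 : τ 0 0 * τ 0 1 + τ 0 1 * τ 1 1 = 0 := by
    have := congrFun (congrFun hττ 0) 1
    simpa [Matrix.mul_apply, Fin.sum_univ_two, Matrix.one_apply] using this
  have e10 : τ 1 0 * τ 0 0 + τ 1 1 * τ 1 0 = 0 := by
    have := congrFun (congrFun hττ 1) 0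
    simpa [Matrix.mul_apply, Fin.sum_univ_two, Matrix.one_apply] using this
  have e00 : τ 0 0 * τ 0 0 + τ 0 1 * τ 1 0 = c := by
    have := congrFun (congrFun hττ 0) 0
    simpa [Matrix.mul_apply, Fin.sum_univ_two, Matrix.one_apply] using this
  have e11 : τ 1 0 * τ 0 1 + τ 1 1 * τ 1 1 = c := by
    have := congrFun (congrFun hττ 1) 1
    simpa [Matrix.mul_apply, Fin.sum_univ_two, Matrix.one_apply] using this
  have h01 : τ 0 1 = 0 := by
    have h' : τ 0 1 * (τ 0 0 + τ 1 1) = 0 := by linear_combination e01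
    rcases mul_eq_zero.mp h' with h'' | h''
    · exact h''
    · exact absurd h'' h
  have h10 : τ 1 0 = 0 := by
    have h' : τ 1 0 * (τ 0 0 + τ 1 1) = 0 := by linear_combination e10
    rcases mul_eq_zero.mp h' with h'' | h''
    · exact h''
    · exact absurd h'' h
  have hdiag : τ 0 0 = τ 1 1 := by
    have h' : (τ 0 0 - τ 1 1) * (τ 0 0 + τ 1 1) = 0 := by linear_combination e00 - e11
    rcases mul_eq_zero.mp h' with h'' | h''
    · linear_combination h''
    · exact absurd h'' h
  apply hns (τ 0 0)
  ext i j
  fin_cases i <;> fin_cases j <;> simp [Matrix.one_apply, h01, h10, ← hdiag]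

/-- Centralizer lemma: anything commuting with such τ lies in span {1, τ}. -/
lemma aux_cent (τ X : Matrix (Fin 2) (Fin 2) K) (h2 : (2 : K) ≠ 0) (c : K) (hc : c ≠ 0)
    (hτ : τ.trace = 0) (hττ : τ * τ = c • 1) (hcomm : X * τ = τ * X) :
    ∃ α β : K, X = α • 1 + β • τ := by
  set X' : Matrix (Fin 2) (Fin 2) K := X - (X.trace / 2) • 1 with hX'def
  have hX'tr : X'.trace = 0 := by
    simp [hX'def, Matrix.trace_smul, Matrix.trace_one]
    field_simp
    ring
  have hX'comm : X' * τ = τ * X' := by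
    simp [hX'def, Matrix.sub_mul, Matrix.mul_sub, Matrix.smul_mul, Matrix.mul_smul, hcomm]
  have key := aux_anticomm X' τ hX'tr hτ
  rw [hX'comm] at key
  set s : K := (τ * X').trace with hs
  have key2 : (2 : K) • (τ * X') = s • (1 : Matrix (Fin 2) (Fin 2) K) := by
    rw [two_smul]; exact key
  have key3 : X' * τ = ((2 : K)⁻¹ * s) • (1 : Matrix (Fin 2) (Fin 2) K) := by
    rw [hX'comm]

    have := congrArg (fun M => (2 : K)⁻¹ • M) key2
    simpa [smul_smul, inv_mul_cancel₀ h2] using this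
  have key4 : c • X' = ((2 : K)⁻¹ * s) • τ := by
    calc c • X' = X' * (τ * τ) := by rw [hττ]; simp [mul_smul_comm]
    _ = (X' * τ) * τ := by rw [Matrix.mul_assoc]
    _ = ((2 : K)⁻¹ * s) • τ := by rw [key3, Matrix.smul_mul, Matrix.one_mul]
  have hX'eq : X' = (c⁻¹ * ((2 : K)⁻¹ * s)) • τ := by
    have := congrArg (fun M => c⁻¹ • M) key4
    simpa [smul_smul, inv_mul_cancel₀ hc] using this
  refine ⟨X.trace / 2, c⁻¹ * ((2 : K)⁻¹ * s), ?_⟩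
  rw [← hX'eq, hX'def]
  abel

/-- A central element of GL₂ is a scalar matrix. -/
lemma aux_central_scalar (Z : GL (Fin 2) K) (hZ : Z ∈ Subgroup.center (GL (Fin 2) K)) :
    ∃ k : K, (Z : Matrix (Fin 2) (Fin 2) K) = k • 1 := by
  have hmem := Subgroup.mem_center_iff.mp hZ
  have hdet1 : ((!![1, 1; 0, 1] : Matrix (Fin 2) (Fin 2) K) * !![1, -1; 0, 1] = 1) ∧
      ((!![1, -1; 0, 1] : Matrix (Fin 2) (Fin 2) K) * !![1, 1; 0, 1] = 1) := by
    constructor <;> (ext i j; fin_cases i <;> fin_cases j <;>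
      simp [Matrix.mul_apply, Fin.sum_univ_two, Matrix.one_apply])
  have hdet2 : ((!![1, 0; 1, 1] : Matrix (Fin 2) (Fin 2) K) * !![1, 0; -1, 1] = 1) ∧
      ((!![1, 0; -1, 1] : Matrix (Fin 2) (Fin 2) K) * !![1, 0; 1, 1] = 1) := by
    constructor <;> (ext i j; fin_cases i <;> fin_cases j <;>
      simp [Matrix.mul_apply, Fin.sum_univ_two, Matrix.one_apply])
  let E1 : GL (Fin 2) K := ⟨!![1, 1; 0, 1], !![1, -1; 0, 1], hdet1.1, hdet1.2⟩
  let E2 : GL (Fin 2) K := ⟨!![1, 0; 1, 1], !![1, 0; -1, 1], hdet2.1, hdet2.2⟩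
  have h1 : !![1, 1; 0, 1] * (Z : Matrix (Fin 2) (Fin 2) K)
      = (Z : Matrix (Fin 2) (Fin 2) K) * !![1, 1; 0, 1] :=
    congrArg Units.val (hmem E1)
  have h2 : !![1, 0; 1, 1] * (Z : Matrix (Fin 2) (Fin 2) K)
      = (Z : Matrix (Fin 2) (Fin 2) K) * !![1, 0; 1, 1] :=
    congrArg Units.val (hmem E2)
  set z : Matrix (Fin 2) (Fin 2) K := (Z : Matrix (Fin 2) (Fin 2) K) with hzdef
  have a10 : z 1 0 = 0 := by
    have := congrFun (congrFun h1 0) 0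
    simp [Matrix.mul_apply, Fin.sum_univ_two] at this
    linear_combination this
  have a01 : z 0 1 = 0 := by
    have := congrFun (congrFun h2 0) 0
    simp [Matrix.mul_apply, Fin.sum_univ_two] at this
    exact this
  have adiag : z 0 0 = z 1 1 := by
    have := congrFun (congrFun h1 0) 1
    simp [Matrix.mul_apply, Fin.sum_univ_two] at this
    linear_combination -this
  refine ⟨z 0 0, ?_⟩
  ext i j
  fin_cases i <;> fin_cases j <;> simp [Matrix.one_apply, a10, a01, ← adiag]

end Aux

theorem stmt_5 (p n : ℕ) [Fact p.Prime] (hodd : p ≠ 2) (hn : n ≠ 0)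
    (K : Type*) [Field K] [IsAlgClosed K] [CharP K p] :
    ¬ ∃ f : Matrix.SpecialLinearGroup (Fin 2) (GaloisField p n) →*
        (GL (Fin 2) K ⧸ Subgroup.center (GL (Fin 2) K)),
      Function.Injective f := by
  set F := GaloisField p n with hF
  have hp2 : (2 : F) ≠ 0 := by
    intro h
    have := (CharP.cast_eq_zero_iff F p 2).mp (by exact_mod_cast h)
    rcases (Nat.prime_dvd_prime_iff_eq (Fact.out) Nat.prime_two).mp this with h'
    exact hodd h'
  have hp2K : (2 : K) ≠ 0 := by
    intro h
    have := (CharP.cast_eq_zero_iff K p 2).mp (by exact_mod_cast h)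
    rcases (Nat.prime_dvd_prime_iff_eq (Fact.out) Nat.prime_two).mp this with h'
    exact hodd h'
  obtain ⟨a', b', hab'⟩ := CharP.sq_add_sq F p (-1 : ℤ)
  set a : F := (a' : F) with ha
  set b : F := (b' : F) with hb
  have hab : a ^ 2 + b ^ 2 = -1 := by rw [ha, hb, hab']; push_cast; ring
  -- the three special elements of SL₂(F)
  have detA : (!![0, 1; -1, 0] : Matrix (Fin 2) (Fin 2) F).det = 1 := by
    simp [Matrix.det_fin_two_of]
  have detB : (!![a, b; b, -a] : Matrix (Fin 2) (Fin 2) F).det = 1 := by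
    simp [Matrix.det_fin_two_of]
    linear_combination -hab
  have detZ : (!![-1, 0; 0, -1] : Matrix (Fin 2) (Fin 2) F).det = 1 := by
    simp [Matrix.det_fin_two_of]
    ring
  set A : Matrix.SpecialLinearGroup (Fin 2) F := ⟨_, detA⟩ with hA
  set B : Matrix.SpecialLinearGroup (Fin 2) F := ⟨_, detB⟩ with hB
  set Z : Matrix.SpecialLinearGroup (Fin 2) F := ⟨_, detZ⟩ with hZ
  have hZ1 : Z ≠ 1 := by
    intro h
    have := congrArg (fun g : Matrix.SpecialLinearGroup (Fin 2) F => (g : Matrix (Fin 2) (Fin 2) F) 0 0) h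
    simp [hZ] at this
    apply hp2
    linear_combination -this
  have hAA : A * A = Z := by
    apply Subtype.ext
    show (!![0, 1; -1, 0] : Matrix (Fin 2) (Fin 2) F) * !![0, 1; -1, 0] = !![-1, 0; 0, -1]
    ext i j
    fin_cases i <;> fin_cases j <;> simp [Matrix.mul_apply, Fin.sum_univ_two]
  have hBB : B * B = Z := by
    apply Subtype.ext
    show (!![a, b; b, -a] : Matrix (Fin 2) (Fin 2) F) * !![a, b; b, -a] = !![-1, 0; 0, -1]
    ext i j
    fin_cases i <;> fin_cases j <;> simp [Matrix.mul_apply, Fin.sum_univ_two] <;>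
      first
      | ring1
      | linear_combination hab
  have hZZ : Z * Z = 1 := by
    apply Subtype.ext
    show (!![-1, 0; 0, -1] : Matrix (Fin 2) (Fin 2) F) * !![-1, 0; 0, -1] = 1
    ext i j
    fin_cases i <;> fin_cases j <;> simp [Matrix.mul_apply, Fin.sum_univ_two, Matrix.one_apply] <;> ring
  have hABBA : A * B ≠ B * A := by
    intro h
    have h01 := congrArg (fun g : Matrix.SpecialLinearGroup (Fin 2) F => (g : Matrix (Fin 2) (Fin 2) F) 0 0) h
    have h02 := congrArg (fun g : Matrix.SpecialLinearGroup (Fin 2) F => (g : Matrix (Fin 2) (Fin 2) F) 0 1) h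
    change ((A * B : Matrix.SpecialLinearGroup (Fin 2) F) : Matrix (Fin 2) (Fin 2) F) 0 0
      = ((B * A : Matrix.SpecialLinearGroup (Fin 2) F) : Matrix (Fin 2) (Fin 2) F) 0 0 at h01
    change ((A * B : Matrix.SpecialLinearGroup (Fin 2) F) : Matrix (Fin 2) (Fin 2) F) 0 1
      = ((B * A : Matrix.SpecialLinearGroup (Fin 2) F) : Matrix (Fin 2) (Fin 2) F) 0 1 at h02
    rw [Matrix.SpecialLinearGroup.coe_mul, Matrix.SpecialLinearGroup.coe_mul] at h01 h02
    simp [Matrix.SpecialLinearGroup.coe_mul, hA, hB, Matrix.mul_apply, Fin.sum_univ_two] at h01 h02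
    have hb0 : b = 0 := by
      have : (2 : F) * b = 0 := by linear_combination h01
      rcases mul_eq_zero.mp this with h' | h'
      · exact absurd h' hp2
      · exact h'
    have ha0 : a = 0 := by
      have : (2 : F) * a = 0 := by linear_combination -h02
      rcases mul_eq_zero.mp this with h' | h'
      · exact absurd h' hp2
      · exact h'
    rw [ha0, hb0] at hab
    simp at hab
    exact one_ne_zero (neg_eq_zero.mp hab.symm)
  rintro ⟨f, hf⟩
  have ht1 : f Z ≠ 1 := by
    intro h
    exact hZ1 (hf (by rw [h, _root_.map_one]))
  obtain ⟨T, hT⟩ := QuotientGroup.mk_surjective (f Z)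
  obtain ⟨M, hM⟩ := QuotientGroup.mk_surjective (f A)
  obtain ⟨N, hN⟩ := QuotientGroup.mk_surjective (f B)
  set τ : Matrix (Fin 2) (Fin 2) K := (T : Matrix (Fin 2) (Fin 2) K) with hτdef
  set m : Matrix (Fin 2) (Fin 2) K := (M : Matrix (Fin 2) (Fin 2) K) with hmdef
  set nn : Matrix (Fin 2) (Fin 2) K := (N : Matrix (Fin 2) (Fin 2) K) with hndef
  -- T² is central, hence scalar
  have hTTc : T * T ∈ Subgroup.center (GL (Fin 2) K) := by
    rw [← QuotientGroup.eq_one_iff, QuotientGroup.mk_mul, hT, ← _root_.map_mul, hZZ, _root_.map_one]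
  obtain ⟨c, hc⟩ := aux_central_scalar (T * T) hTTc
  have hττ : τ * τ = c • 1 := by
    rw [hτdef, ← Units.val_mul]; exact hc
  have hcne : c ≠ 0 := by
    intro h
    rw [h, zero_smul] at hττ
    exact not_isUnit_zero (M₀ := Matrix (Fin 2) (Fin 2) K)
      (by rw [← hττ, hτdef, ← Units.val_mul]; exact (T * T).isUnit)
  -- τ is not scalar
  have hns : ∀ k : K, τ ≠ k • 1 := by
    intro k hk
    have hcent : T ∈ Subgroup.center (GL (Fin 2) K) := by
      refine Subgroup.mem_center_iff.mpr fun g => Units.ext ?_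
      show (g : Matrix (Fin 2) (Fin 2) K) * (T : Matrix (Fin 2) (Fin 2) K)
        = (T : Matrix (Fin 2) (Fin 2) K) * (g : Matrix (Fin 2) (Fin 2) K)
      rw [← hτdef, hk, Matrix.mul_smul, Matrix.smul_mul, Matrix.mul_one, Matrix.one_mul]
    exact ht1 (by rw [← hT]; exact (QuotientGroup.eq_one_iff T).mpr hcent)
  -- trace of τ is zero
  have hτtr : τ.trace = 0 := aux_traceless τ c hττ hns
  -- elements lifting squares of A and B commute with τ
  have key : ∀ (W : GL (Fin 2) K) (w : Matrix.SpecialLinearGroup (Fin 2) F),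
      (QuotientGroup.mk W : GL (Fin 2) K ⧸ Subgroup.center (GL (Fin 2) K)) = f w →
      w * w = Z → (W : Matrix (Fin 2) (Fin 2) K) * τ = τ * (W : Matrix (Fin 2) (Fin 2) K) := by
    intro W w hW hww
    set u : Matrix (Fin 2) (Fin 2) K := (W : Matrix (Fin 2) (Fin 2) K) with hudef
    have hq : (QuotientGroup.mk (W * W) : GL (Fin 2) K ⧸ Subgroup.center (GL (Fin 2) K))
        = QuotientGroup.mk T := by
      rw [QuotientGroup.mk_mul, hW, ← _root_.map_mul, hww, hT]
    have hmem : T⁻¹ * (W * W) ∈ Subgroup.center (GL (Fin 2) K) :=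
      QuotientGroup.eq.mp hq.symm
    obtain ⟨k₁, hk₁⟩ := aux_central_scalar _ hmem
    have hk₁0 : k₁ ≠ 0 := by
      intro h
      rw [h, zero_smul] at hk₁
      exact not_isUnit_zero (M₀ := Matrix (Fin 2) (Fin 2) K)
        (hk₁ ▸ (T⁻¹ * (W * W)).isUnit)
    have hmm : u * u = k₁ • τ := by
      have hWW : (W * W : GL (Fin 2) K) = T * (T⁻¹ * (W * W)) := by group
      have h' := congrArg Units.val hWW
      rw [Units.val_mul, Units.val_mul, hk₁, ← hudef, ← hτdef] at h'
      rw [h', Matrix.mul_smul, Matrix.mul_one]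
    have h1 : k₁ • (u * τ) = k₁ • (τ * u) := by
      calc k₁ • (u * τ) = u * (k₁ • τ) := by rw [Matrix.mul_smul]
      _ = u * (u * u) := by rw [hmm]
      _ = (u * u) * u := by rw [Matrix.mul_assoc]
      _ = (k₁ • τ) * u := by rw [hmm]
      _ = k₁ • (τ * u) := by rw [Matrix.smul_mul]
    have := congrArg (fun X => k₁⁻¹ • X) h1
    simpa [smul_smul, inv_mul_cancel₀ hk₁0] using this
  have hMcomm : m * τ = τ * m := key M A hM hAA
  have hNcomm : nn * τ = τ * nn := key N B hN hBB
  obtain ⟨α, β, hm⟩ := aux_cent τ m hp2K c hcne hτtr hττ hMcomm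
  obtain ⟨γ, δ, hnn⟩ := aux_cent τ nn hp2K c hcne hτtr hττ hNcomm
  have hmn : m * nn = nn * m := by
    rw [hm, hnn]
    simp only [Matrix.add_mul, Matrix.mul_add, Matrix.smul_mul, Matrix.mul_smul,
      Matrix.one_mul, Matrix.mul_one, smul_add, smul_smul]
    rw [mul_comm γ α, mul_comm γ β, mul_comm δ α, mul_comm δ β]
    abel
  have hMN : M * N = N * M := by
    apply Units.ext
    rw [Units.val_mul, Units.val_mul]
    exact hmn
  apply hABBA
  apply hf
  rw [_root_.map_mul, _root_.map_mul, ← hM, ← hN, ← QuotientGroup.mk_mul,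
    ← QuotientGroup.mk_mul, hMN]
end
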